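/- arXiv:1509.06699 — 5 statements merged into one kernel-verified Lean document; each statement's English description precedes it below -/
import Mathlib

section
/- (Determinant of the complement log matrix / Duality Principle, determinant form) Let $A$ be an $n \times n$ matrix with entries in $\{0,1\}$ such that every column of $A$ sums to $d$, where $1 \le d \le n-1$. Let $A^\vee = J - A$, where $J$ is the all-ones matrix. Then every column of $A^\vee$ sums to $n - d$, and $\det A = \pm d$ if and only if $\det A^\vee = \pm (n-d)$. -/
lemma aux_cancel (a e : ℤ) (ha : a ≠ 0) : (a * e = a ∨ a * e = -a) ↔ (e = 1 ∨ e = -1) := by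
  constructor
  · rintro (h | h)
    · left
      exact mul_left_cancel₀ ha (h.trans (mul_one a).symm)
    · right
      have : a * e = a * (-1) := by linarith
      exact mul_left_cancel₀ ha this
  · rintro (h | h) <;> subst h <;> simp

/-- Duality principle, determinant form: for a `{0,1}` matrix with column sums `d`,
`1 ≤ d ≤ n-1`, no zero row and no all-ones row, the complement `J - A` has
column sums `n - d`, and `det A = ±d` iff `det (J - A) = ±(n - d)`. -/
theorem duality_det (n d : ℕ) (hd1 : 1 ≤ d) (hdn : d ≤ n - 1)
    (A : Matrix (Fin n) (Fin n) ℤ)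
    (h01 : ∀ i j, A i j = 0 ∨ A i j = 1)
    (hcol : ∀ j, ∑ i, A i j = (d : ℤ))
    (hrow1 : ∀ i, ∃ j, A i j = 1)
    (hrow0 : ∀ i, ∃ j, A i j = 0) :
    (∀ j, ∑ i, (1 - A i j) = (n : ℤ) - d) ∧
      ((A.det = (d : ℤ) ∨ A.det = -(d : ℤ)) ↔
        ((Matrix.of fun i j => 1 - A i j).det = (n : ℤ) - d ∨
          (Matrix.of fun i j => 1 - A i j).det = -((n : ℤ) - d))) := by
  have hn2 : 2 ≤ n := by omega
  haveI : NeZero n := ⟨by omega⟩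
  set B : Matrix (Fin n) (Fin n) ℤ := Matrix.of fun i j => 1 - A i j with hB
  have hcolB : ∀ j, ∑ i, B i j = (n : ℤ) - d := by
    intro j
    simp [hB, Finset.sum_sub_distrib, hcol j]
  refine ⟨fun j => hcolB j, ?_⟩
  -- generic lemma: if all column sums are c, then det M = c * det (row 0 ↦ ones)
  have key : ∀ (M : Matrix (Fin n) (Fin n) ℤ) (c : ℤ), (∀ j, ∑ i, M i j = c) →
      M.det = c * (M.updateRow 0 (fun _ => (1 : ℤ))).det := by
    intro M c hc
    have h1 : (M.updateRow 0 (∑ k, (1 : ℤ) • M k)).det = (1 : ℤ) • M.det :=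
      Matrix.det_updateRow_sum M 0 (fun _ => (1 : ℤ))
    have h2 : (∑ k, (1 : ℤ) • M k) = (c • fun _ => (1 : ℤ) : Fin n → ℤ) := by
      funext j
      simp [Finset.sum_apply, hc j]
      rw [← hc j]; exact Finset.sum_apply j Finset.univ (fun x => M x)
    have h3 : (M.updateRow 0 (c • fun _ => (1 : ℤ))).det
        = c * (M.updateRow 0 (fun _ => (1 : ℤ))).det :=
      Matrix.det_updateRow_smul M 0 c _
    rw [← h3, ← h2, h1, one_smul]
  set E : Matrix (Fin n) (Fin n) ℤ := A.updateRow 0 (fun _ => (1 : ℤ)) with hE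
  set E' : Matrix (Fin n) (Fin n) ℤ := B.updateRow 0 (fun _ => (1 : ℤ)) with hE'
  have hdetA : A.det = (d : ℤ) * E.det := key A _ hcol
  have hdetB : B.det = ((n : ℤ) - d) * E'.det := key B _ hcolB
  -- relate E' and E via a triangular matrix
  set P : Matrix (Fin n) (Fin n) ℤ :=
    Matrix.of fun i j => if j = 0 then 1 else if i = j then -1 else 0 with hP
  have hPE : E' = P * E := by
    ext i j
    rw [Matrix.mul_apply]
    by_cases hi : i = 0
    · subst hi
      rw [Finset.sum_eq_single (0 : Fin n)]
      · simp [hP, hE, hE']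
      · intro k _ hk
        simp [hP, hk, (Ne.symm hk : (0 : Fin n) ≠ k)]
      · simp
    · have : ∀ k ∈ Finset.univ, P i k * E k j
          = (if k = 0 then E 0 j else 0) + (if k = i then -E i j else 0) := by
        intro k _
        by_cases h0 : k = 0
        · subst h0
          simp [hP, Ne.symm hi]
        · by_cases h1 : k = i
          · subst h1
            simp [hP, h0]
          · have hik : ¬ i = k := fun h => h1 h.symm
            simp [hP, h0, hik, h1]
      rw [Finset.sum_congr rfl this]
      have e0 : E 0 j = 1 := by simp [hE]
      have eij : E i j = A i j := by simp [hE, Matrix.updateRow_ne hi]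
      simp [Finset.sum_add_distrib, Finset.sum_ite_eq', e0, eij, hE', hB,
        Matrix.updateRow_ne hi]
      ring
  have hPtri : P.BlockTriangular OrderDual.toDual := by
    intro i j hij
    have hij' : i < j := hij
    have hj0 : j ≠ 0 := by
      intro h
      rw [Fin.lt_def, h] at hij'
      simp at hij'
    simp [hP, hj0, (ne_of_lt hij' : i ≠ j)]
  have hdetP : P.det = (-1 : ℤ) ^ (n - 1) := by
    rw [Matrix.det_of_lowerTriangular P hPtri]
    rw [← Finset.mul_prod_erase Finset.univ _ (Finset.mem_univ (0 : Fin n))]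
    have h1 : P 0 0 = 1 := by simp [hP]
    have h2 : ∀ i ∈ Finset.univ.erase (0 : Fin n), P i i = -1 := by
      intro i hi
      have : i ≠ 0 := Finset.ne_of_mem_erase hi
      simp [hP, this]
    rw [h1, Finset.prod_congr rfl h2, Finset.prod_const, one_mul,
      Finset.card_erase_of_mem (Finset.mem_univ _), Finset.card_univ, Fintype.card_fin]
  have hdetE' : E'.det = (-1 : ℤ) ^ (n - 1) * E.det := by
    rw [hPE, Matrix.det_mul, hdetP]
  have hd0 : (d : ℤ) ≠ 0 := Int.natCast_ne_zero.mpr (by omega)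
  have hnd0 : (n : ℤ) - d ≠ 0 := by
    have : (d : ℤ) + 1 ≤ n := by exact_mod_cast (by omega : d + 1 ≤ n)
    omega
  rcases neg_one_pow_eq_or ℤ (n - 1) with hs | hs
  · rw [hdetA, hdetB, hdetE', hs, one_mul]
    rw [aux_cancel _ _ hd0, aux_cancel _ _ hnd0]
  · rw [hdetA, hdetB, hdetE', hs]
    rw [aux_cancel _ _ hd0]
    have : ((n : ℤ) - d) * (-1 * E.det) = ((n : ℤ) - d) * (-E.det) := by ring
    rw [this, aux_cancel _ _ hnd0]
    constructor <;> rintro (h | h) <;> omega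
end

section
/- (Classification of quadratic monomial Cremona sets) Let $F \subset \mathbb{K}[x_1,\ldots,x_n]$ be a cohesive set of $n$ monomials of degree $2$ satisfying the canonical restrictions, with log matrix $A_F$ and associated graph $G_F$ (loops allowed for squares). The following are equivalent: (1) $\det A_F \ne 0$; (2) $\det A_F = \pm 2$ (i.e., $F$ is a Cremona set); (3) either $G_F$ has no loops and exactly one cycle, which has odd length, or $G_F$ is a tree together with exactly one loop. -/
open SimpleGraph Finset

namespace QCC
variable {n : ℕ}

def chi (a : Fin n) : Fin n → ℤ := fun i => if i = a then 1 else 0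

lemma sym2_rep (s : Sym2 (Fin n)) : ∃ a b, s = s(a, b) := by
  induction s using Sym2.ind with | _ a b => exact ⟨a, b, rfl⟩

lemma odd_ne_zero {m : ℤ} (h : Odd m) : m ≠ 0 := by
  rintro rfl; rw [Int.odd_iff] at h; norm_num at h

def Bmat (n : ℕ) [NeZero n] : Matrix (Fin n) (Fin n) ℤ :=
  Matrix.of fun i j => if j = 0 then (if i = 0 then 2 else 0)
    else ((if i = 0 then 1 else 0) + (if i = j then 1 else 0))

lemma Bdet [NeZero n] : (Bmat n).det = 2 := by
  rw [Matrix.det_of_upperTriangular]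
  · rw [Finset.prod_eq_single (0 : Fin n)]
    · simp [Bmat]
    · intro b _ hb; simp [Bmat, hb]
    · intro h; exact absurd (Finset.mem_univ _) h
  · intro i j hij
    simp only [id_eq] at hij
    have h2 : i ≠ 0 := by rintro rfl; exact absurd hij (by simp)
    have h3 : ¬ i = j := fun h => (ne_of_lt hij) h.symm
    by_cases hj : j = 0 <;> simp [Bmat, hj, h2, h3]

lemma Bcol0 [NeZero n] : (fun i => Bmat n i 0) = (2:ℤ) • chi 0 := by
  funext i; simp [Bmat, chi, mul_ite]

lemma Bcolk [NeZero n] {k : Fin n} (hk : k ≠ 0) :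
    (fun i => Bmat n i k) = chi 0 + chi k := by
  funext i; simp [Bmat, chi, hk]

lemma Brep [NeZero n] (c : Fin n → ℤ) (hc : ∑ i, c i = 2) :
    (Bmat n).mulVec
      (fun k => if k = 0 then 1 - ∑ k' ∈ Finset.univ.erase 0, c k' else c k) = c := by
  funext i
  simp only [Matrix.mulVec, dotProduct]
  by_cases hi : i = 0
  · subst hi
    rw [← Finset.add_sum_erase _ _ (Finset.mem_univ (0 : Fin n))]
    have : ∀ j ∈ Finset.univ.erase (0 : Fin n),
        Bmat n 0 j * (if j = 0 then 1 - ∑ k' ∈ Finset.univ.erase 0, c k' else c j) = c j := by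
      intro j hj
      have hj0 : j ≠ 0 := (Finset.mem_erase.mp hj).1
      simp [Bmat, hj0, Ne.symm hj0]
    rw [Finset.sum_congr rfl this]
    simp [Bmat]
    omega
  · have : ∀ j ∈ (Finset.univ : Finset (Fin n)),
        Bmat n i j * (if j = 0 then 1 - ∑ k' ∈ Finset.univ.erase 0, c k' else c j)
          = if j = i then c j else 0 := by
      intro j _
      by_cases hj : j = 0
      · subst hj
        have h5 : ¬ ((0:Fin n) = i) := fun h => hi h.symm
        simp [Bmat, hi, h5]
      · by_cases hji : j = i
        · subst hji; simp [Bmat, hj, hi]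
        · have h4 : ¬ i = j := fun h => hji h.symm
          simp [Bmat, hj, hji, h4, hi]
    rw [Finset.sum_congr rfl this, Finset.sum_ite_eq' Finset.univ i c]
    simp


/-- In a connected acyclic graph every closed walk has even length. -/
lemma closed_walk_even {V : Type*} [DecidableEq V] {G : SimpleGraph V}
    (hconn : G.Connected) (hac : G.IsAcyclic) {v : V} (w : G.Walk v v) :
    Even w.length := by
  obtain ⟨v0⟩ := hconn.nonempty
  let pth : ∀ a, G.Walk v0 a := fun a => ((hconn.preconnected v0 a).some).bypass
  have hpath : ∀ a, (pth a).IsPath := fun a => Walk.bypass_isPath _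
  have huniq : ∀ a (q : G.Walk v0 a), q.IsPath → q.length = (pth a).length := by
    intro a q hq
    have h := hac.path_unique ⟨q, hq⟩ ⟨pth a, hpath a⟩
    exact congrArg (fun p : G.Path v0 a => p.1.length) h
  have core : ∀ a b, G.Adj a b → ¬(Even (pth a).length ↔ Even (pth b).length) := by
    intro a b hab hiff
    by_cases hmem : b ∈ (pth a).support
    · have hq1 : ((pth a).takeUntil b hmem).IsPath := (hpath a).takeUntil hmem
      have hq2 : ((pth a).dropUntil b hmem).IsPath := (hpath a).dropUntil hmem
      have hsingle : (Walk.cons hab.symm Walk.nil : G.Walk b a).IsPath := by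
        rw [Walk.cons_isPath_iff]
        exact ⟨Walk.IsPath.nil, by simp [hab.ne']⟩
      have hq2s : (pth a).dropUntil b hmem = Walk.cons hab.symm Walk.nil := by
        have h := hac.path_unique ⟨(pth a).dropUntil b hmem, hq2⟩
          ⟨Walk.cons hab.symm Walk.nil, hsingle⟩
        exact congrArg (fun p : G.Path b a => p.1) h
      have hlen : ((pth a).takeUntil b hmem).length + ((pth a).dropUntil b hmem).length
          = (pth a).length := by
        conv_rhs => rw [← Walk.take_spec (pth a) hmem]
        rw [Walk.length_append]
      rw [hq2s] at hlen
      simp only [Walk.length_cons, Walk.length_nil] at hlen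
      have := huniq b _ hq1
      simp only [Nat.even_iff] at hiff
      omega
    · have hq : ((pth a).concat hab).IsPath := by
        rw [Walk.isPath_def, Walk.support_concat]
        exact List.Nodup.append ((hpath a).support_nodup) (List.nodup_singleton b)
          (by intro x hx hxb; rw [List.mem_singleton] at hxb; subst hxb; exact hmem hx)
      have := huniq b _ hq
      rw [Walk.length_concat] at this
      simp only [Nat.even_iff] at hiff
      omega
  let c : G.Coloring Bool := Coloring.mk (fun a => decide (Even (pth a).length)) (by
    intro a b hab
    simp only [ne_eq, decide_eq_decide]
    exact core a b hab)
  exact (c.even_length_iff_congr w).mpr Iff.rfl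


variable {e : Fin n → Sym2 (Fin n)} {A : Matrix (Fin n) (Fin n) ℤ}
  (hA : ∀ i j, A i j =
      (if i ∈ e j then 1 else 0) + (if e j = Sym2.diag i then 1 else 0))

include hA

lemma col_eq {j : Fin n} {a b : Fin n} (hj : e j = s(a, b)) :
    A.mulVec (Pi.single j (1:ℤ)) = chi a + chi b := by
  rw [Matrix.mulVec_single_one]
  funext i
  simp only [Pi.add_apply, chi, mul_one, Matrix.col_apply]
  rw [hA i j, hj]
  have hd : Sym2.diag i = s(i, i) := rfl
  by_cases h1 : i = a
  · subst h1
    by_cases h2 : i = b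
    · subst h2; simp [hd]
    · simp [Sym2.mem_iff, hd, h2, Ne.symm h2, Sym2.eq_iff]
  · by_cases h2 : i = b
    · subst h2; simp [Sym2.mem_iff, hd, h1, Ne.symm h1, Sym2.eq_iff]
    · simp [Sym2.mem_iff, hd, h1, h2, Ne.symm h1, Ne.symm h2, Sym2.eq_iff]

lemma walk_vec {a b : Fin n}
    (w : (SimpleGraph.fromEdgeSet {s | ∃ j, e j = s}).Walk a b) :
    ∃ x : Fin n → ℤ, A.mulVec x = chi a - ((-1:ℤ) ^ w.length) • chi b := by
  induction w with
  | nil => exact ⟨0, by simp [Matrix.mulVec_zero]⟩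
  | @cons u c b h p ih =>
    obtain ⟨x, hx⟩ := ih
    obtain ⟨j, hj⟩ := (SimpleGraph.fromEdgeSet_adj _).mp h |>.1
    refine ⟨Pi.single j 1 - x, ?_⟩
    rw [Matrix.mulVec_sub, col_eq hA hj, hx, Walk.length_cons, pow_succ]
    module

lemma trail_vec (hinj : Function.Injective e) {a b : Fin n}
    (w : (SimpleGraph.fromEdgeSet {s | ∃ j, e j = s}).Walk a b) (hw : w.IsTrail) :
    ∃ x : Fin n → ℤ, A.mulVec x = chi a - ((-1:ℤ) ^ w.length) • chi b ∧
      (∀ j, e j ∈ w.edges → Odd (x j)) ∧ (∀ j, e j ∉ w.edges → x j = 0) := by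
  induction w with
  | nil => exact ⟨0, by simp [Matrix.mulVec_zero], by simp [Walk.edges_nil], fun _ _ => rfl⟩
  | @cons u c b h p ih =>
    rw [Walk.isTrail_cons] at hw
    obtain ⟨x, hx, hx1, hx0⟩ := ih hw.1
    obtain ⟨j, hj⟩ := (SimpleGraph.fromEdgeSet_adj _).mp h |>.1
    refine ⟨Pi.single j 1 - x, ?_, ?_, ?_⟩
    · rw [Matrix.mulVec_sub, col_eq hA hj, hx, Walk.length_cons, pow_succ]
      module
    · intro j' hj'
      rw [Walk.edges_cons, List.mem_cons] at hj'
      rcases hj' with hj' | hj'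
      · have : j' = j := hinj (by rw [hj', hj])
        subst this
        have hxj : x j' = 0 := hx0 j' (by rw [hj]; exact hw.2)
        simp [Pi.single_eq_same, hxj]
      · have hne : j' ≠ j := by rintro rfl; exact hw.2 (hj ▸ hj')
        have := hx1 j' hj'
        simpa [Pi.single_eq_of_ne hne] using this.neg
    · intro j' hj'
      rw [Walk.edges_cons, List.mem_cons] at hj'
      push_neg at hj'
      have hne : j' ≠ j := by rintro rfl; exact hj'.1 hj
      simp [Pi.single_eq_of_ne hne, hx0 j' hj'.2]

lemma col_apply {j a b : Fin n} (hj : e j = s(a, b)) (i : Fin n) :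
    A i j = chi a i + chi b i := by
  have h := congrFun (col_eq hA hj) i
  rw [Matrix.mulVec_single] at h
  simpa using h

lemma col_sum (j : Fin n) : ∑ i, A i j = 2 := by
  obtain ⟨a, b, hj⟩ := sym2_rep (e j)
  rw [Finset.sum_congr rfl fun i _ => col_apply hA hj i, Finset.sum_add_distrib]
  simp [chi, Finset.sum_ite_eq']

lemma det_pm_two (hn : 2 ≤ n)
    (hcoh : (SimpleGraph.fromEdgeSet {s | ∃ j, e j = s}).Connected)
    (hDO : (∃ j, (e j).IsDiag) ∨
      ∃ (v : Fin n) (w : (SimpleGraph.fromEdgeSet {s | ∃ j, e j = s}).Walk v v),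
        Odd w.length) :
    (A.det = 2 ∨ A.det = -2) ∧ A.det ≠ 0 := by
  haveI : NeZero n := ⟨by omega⟩
  -- a vertex v with 2 • chi v in the column span
  have h2v : ∃ (v : Fin n) (x : Fin n → ℤ), A.mulVec x = (2:ℤ) • chi v := by
    rcases hDO with ⟨j, hdiag⟩ | ⟨v, w, hodd⟩
    · obtain ⟨a, b, hj⟩ := sym2_rep (e j)
      have hab : a = b := by rwa [hj, Sym2.mk_isDiag_iff] at hdiag
      subst hab
      exact ⟨a, Pi.single j 1, by rw [col_eq hA hj]; module⟩
    · obtain ⟨x, hx⟩ := walk_vec hA w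
      rw [hodd.neg_one_pow] at hx
      exact ⟨v, x, by rw [hx]; module⟩
  obtain ⟨v, xv, hxv⟩ := h2v
  have hbase : ∀ a : Fin n, (∃ x, A.mulVec x = chi v + chi a) ∧
      (∃ x, A.mulVec x = chi v - chi a) := by
    intro a
    obtain ⟨x, hx⟩ := walk_vec hA ((hcoh.preconnected v a).some)
    rcases Nat.even_or_odd ((hcoh.preconnected v a).some.length) with hp | hp
    · rw [hp.neg_one_pow] at hx
      refine ⟨⟨xv - x, ?_⟩, ⟨x, by rw [hx]; module⟩⟩
      rw [Matrix.mulVec_sub, hxv, hx]; module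
    · rw [hp.neg_one_pow] at hx
      refine ⟨⟨x, by rw [hx]; module⟩, ⟨xv - x, ?_⟩⟩
      rw [Matrix.mulVec_sub, hxv, hx]; module
  -- every column of B is in the column span of A
  have hBcols : ∀ k : Fin n, ∃ u, A.mulVec u = fun i => Bmat n i k := by
    intro k
    by_cases hk : k = 0
    · subst hk
      obtain ⟨⟨x1, hx1⟩, ⟨x2, hx2⟩⟩ := hbase 0
      refine ⟨x1 - x2, ?_⟩
      rw [Matrix.mulVec_sub, hx1, hx2, Bcol0]; module
    · obtain ⟨⟨x1, hx1⟩, _⟩ := hbase k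
      obtain ⟨_, ⟨x2, hx2⟩⟩ := hbase 0
      refine ⟨x1 - x2, ?_⟩
      rw [Matrix.mulVec_sub, hx1, hx2, Bcolk hk]; module
  choose V hV using hBcols
  have hAV : A * (Matrix.of fun j k => V k j) = Bmat n := by
    ext i k
    rw [Matrix.mul_apply]
    have h := congrFun (hV k) i
    simpa [Matrix.mulVec, dotProduct] using h
  -- A = B * U
  have hBU : Bmat n * (Matrix.of fun k j =>
      if k = 0 then 1 - ∑ k' ∈ Finset.univ.erase 0, A k' j else A k j) = A := by
    ext i j
    rw [Matrix.mul_apply]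
    have h := congrFun (Brep (fun i => A i j) (col_sum hA j)) i
    simpa [Matrix.mulVec, dotProduct] using h
  have hd1 : A.det * (Matrix.of fun j k => V k j).det = 2 := by
    rw [← Matrix.det_mul, hAV, Bdet]
  have hd2 : 2 * (Matrix.of fun k j =>
      if k = 0 then 1 - ∑ k' ∈ Finset.univ.erase 0, A k' j else A k j).det = A.det := by
    rw [← Bdet (n := n), ← Matrix.det_mul, hBU]
  set dV := (Matrix.of fun j k => V k j).det
  set dU := (Matrix.of fun k j =>
      if k = 0 then 1 - ∑ k' ∈ Finset.univ.erase 0, A k' j else A k j).det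
  have hdu : A.det = 2 * dU := hd2.symm
  have key : dU * dV = 1 := by
    have : 2 * (dU * dV) = 2 * 1 := by rw [← mul_assoc, ← hdu]; linarith [hd1]
    exact mul_left_cancel₀ (by norm_num) this
  have hunit : dU = 1 ∨ dU = -1 := Int.isUnit_iff.mp (IsUnit.of_mul_eq_one _ key)
  constructor
  · rcases hunit with h | h <;> rw [hdu, h] <;> norm_num
  · rcases hunit with h | h <;> rw [hdu, h] <;> norm_num


lemma det_zero_of_bipartite (hn : 2 ≤ n)
    (hcoh : (SimpleGraph.fromEdgeSet {s | ∃ j, e j = s}).Connected)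
    (hnd : ∀ j, ¬ (e j).IsDiag)
    (hno : ∀ (v : Fin n) (w : (SimpleGraph.fromEdgeSet {s | ∃ j, e j = s}).Walk v v),
      ¬ Odd w.length) :
    A.det = 0 := by
  haveI : NeZero n := ⟨by omega⟩
  set G := SimpleGraph.fromEdgeSet {s | ∃ j, e j = s} with hG
  set v0 : Fin n := 0 with hv0
  set pth : ∀ a : Fin n, G.Walk v0 a := fun a => (hcoh.preconnected v0 a).some with hpth
  set y : Fin n → ℤ := fun a => if Even (pth a).length then 1 else -1 with hy
  have key : ∀ a b : Fin n, G.Adj a b → y a + y b = 0 := by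
    intro a b hab
    have hcl := hno v0 (((pth a).concat hab).append (pth b).reverse)
    simp only [Walk.length_append, Walk.length_concat, Walk.length_reverse,
      Nat.odd_iff] at hcl
    simp only [hy]
    by_cases h1 : Even (pth a).length <;> by_cases h2 : Even (pth b).length <;>
      simp only [h1, h2, if_true, if_false] <;>
      rw [Nat.even_iff] at h1 h2 <;> first | omega | ring
  have hker : Matrix.vecMul y A = 0 := by
    funext j
    obtain ⟨a, b, hj⟩ := sym2_rep (e j)
    have hab : a ≠ b := by
      intro h; exact hnd j (by rw [hj, h]; exact Sym2.mk_isDiag_iff.mpr rfl)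
    have hadj : G.Adj a b := by
      rw [hG, SimpleGraph.fromEdgeSet_adj]
      exact ⟨⟨j, hj⟩, hab⟩
    have hterm : ∀ i ∈ (Finset.univ : Finset (Fin n)), y i * A i j
        = (if i = a then y i else 0) + (if i = b then y i else 0) := by
      intro i _
      rw [col_apply hA hj i]
      simp only [chi]
      by_cases h1 : i = a <;> by_cases h2 : i = b <;> simp [h1, h2, hab, Ne.symm hab]
    simp only [Matrix.vecMul, dotProduct]
    rw [Finset.sum_congr rfl hterm, Finset.sum_add_distrib,
      Finset.sum_ite_eq' Finset.univ a y, Finset.sum_ite_eq' Finset.univ b y]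
    simpa using key a b hadj
  apply Matrix.exists_vecMul_eq_zero_iff.mp
  refine ⟨y, ?_, hker⟩
  intro h
  have := congrFun h v0
  simp only [hy, Pi.zero_apply] at this
  split_ifs at this <;> norm_num at this


end QCC

/-- Classification of quadratic monomial Cremona sets. The monomials of degree 2
are encoded as elements `e j : Sym2 (Fin n)` (unordered pairs, with diagonal
elements encoding squares/loops), `A` is the log matrix, the canonical
restrictions hold and the associated graph is connected (cohesive).
Then: `det A ≠ 0` iff `det A = ±2` (Cremona) iff either the graph is loopless
with a unique cycle that is odd, or it is a tree with exactly one loop. -/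
theorem quadratic_cremona_classification (n : ℕ) (hn : 2 ≤ n)
    (e : Fin n → Sym2 (Fin n))
    (A : Matrix (Fin n) (Fin n) ℤ)
    (hA : ∀ i j, A i j =
      (if i ∈ e j then 1 else 0) + (if e j = Sym2.diag i then 1 else 0))
    (hcan1 : ∀ i, ∃ j, i ∈ e j)
    (hcan2 : ∀ i, ∃ j, i ∉ e j)
    (hcoh : (SimpleGraph.fromEdgeSet {s | ∃ j, e j = s}).Connected) :
    (A.det ≠ 0 ↔ (A.det = 2 ∨ A.det = -2)) ∧
    (A.det ≠ 0 ↔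
      (Function.Injective e ∧
        (((∀ j, ¬ (e j).IsDiag) ∧
          ∃ (v : Fin n)
            (c : (SimpleGraph.fromEdgeSet {s | ∃ j, e j = s}).Walk v v),
            c.IsCycle ∧ Odd c.length ∧
            ∀ (w : Fin n)
              (c' : (SimpleGraph.fromEdgeSet {s | ∃ j, e j = s}).Walk w w),
              c'.IsCycle → c'.edges.toFinset = c.edges.toFinset)
        ∨ ((∃! j, (e j).IsDiag) ∧
            (SimpleGraph.fromEdgeSet {s | ∃ j, e j = s}).IsAcyclic)))) := by
  haveI : NeZero n := ⟨by omega⟩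
  set G := SimpleGraph.fromEdgeSet {s | ∃ j, e j = s} with hG
  have hM2 : ((∃ j, (e j).IsDiag) ∨ ∃ v, ∃ w : G.Walk v v, Odd w.length) →
      (A.det = 2 ∨ A.det = -2) ∧ A.det ≠ 0 := QCC.det_pm_two hA hn hcoh
  have hDO_of_det : A.det ≠ 0 →
      ((∃ j, (e j).IsDiag) ∨ ∃ v, ∃ w : G.Walk v v, Odd w.length) := by
    intro hdet
    by_contra h
    push_neg at h
    exact hdet (QCC.det_zero_of_bipartite hA hn hcoh
      (fun j hd => h.1 j hd) (fun v w => h.2 v w))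
  constructor
  · exact ⟨fun h => (hM2 (hDO_of_det h)).1, fun h => by rcases h with h | h <;> omega⟩
  constructor
  · -- det ≠ 0 → structure
    intro hdet
    have hDO := hDO_of_det hdet
    -- injectivity of e
    have hinj : Function.Injective e := by
      intro j j' hjj'
      by_contra hne
      apply hdet
      apply Matrix.exists_mulVec_eq_zero_iff.mp
      obtain ⟨a, b, hj⟩ := QCC.sym2_rep (e j)
      refine ⟨Pi.single j 1 - Pi.single j' 1, ?_, ?_⟩
      · intro h0
        have := congrFun h0 j
        simp [Pi.single_eq_same, Pi.single_eq_of_ne hne] at this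
      · rw [Matrix.mulVec_sub, QCC.col_eq hA hj,
          QCC.col_eq hA (show e j' = s(a, b) from hjj' ▸ hj), sub_self]
    -- cycle edges give columns
    have hcyc_edge : ∀ {u v : Fin n} (w : G.Walk u v) (s : Sym2 (Fin n)),
        s ∈ w.edges → (∃ j, e j = s) ∧ ¬ s.IsDiag := by
      intro u v w s hs
      have h := w.edges_subset_edgeSet hs
      rw [hG, SimpleGraph.edgeSet_fromEdgeSet] at h
      exact ⟨h.1, h.2⟩
    -- no even cycles
    have hnoeven : ∀ {v : Fin n} (c : G.Walk v v), c.IsCycle → ¬ Even c.length := by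
      intro v c hc hev
      obtain ⟨z, hz, hz1, hz0⟩ := QCC.trail_vec hA hinj c hc.isTrail
      rw [hev.neg_one_pow, one_smul, sub_self] at hz
      apply hdet
      apply Matrix.exists_mulVec_eq_zero_iff.mp
      refine ⟨z, ?_, hz⟩
      have hlen : c.edges ≠ [] := by
        have h3 := hc.three_le_length
        have := c.length_edges
        intro h0; rw [h0] at this; simp at this; omega
      obtain ⟨s, hs⟩ := List.exists_mem_of_ne_nil _ hlen
      obtain ⟨⟨j, hj⟩, -⟩ := hcyc_edge c s hs
      intro h0
      exact QCC.odd_ne_zero (hz1 j (hj ▸ hs)) (congrFun h0 j)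
    refine ⟨hinj, ?_⟩
    by_cases hD : ∃ j, (e j).IsDiag
    · -- loop case : tree with one loop
      obtain ⟨j₀, hdiag⟩ := hD
      obtain ⟨a, a', hj₀⟩ := QCC.sym2_rep (e j₀)
      have haa : a = a' := by rwa [hj₀, Sym2.mk_isDiag_iff] at hdiag
      subst haa
      refine Or.inr ⟨⟨j₀, hdiag, ?_⟩, ?_⟩
      · -- uniqueness of the loop
        intro j₁ hdiag₁
        by_contra hne
        obtain ⟨b, b', hj₁⟩ := QCC.sym2_rep (e j₁)
        have hbb : b = b' := by rwa [hj₁, Sym2.mk_isDiag_iff] at hdiag₁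
        subst hbb
        obtain ⟨x, hx⟩ := QCC.walk_vec hA ((hcoh.preconnected a b).some)
        apply hdet
        apply Matrix.exists_mulVec_eq_zero_iff.mp
        set l := ((hcoh.preconnected a b).some).length with hl
        refine ⟨(2:ℤ) • x - Pi.single j₀ 1 + ((-1:ℤ)^l) • Pi.single j₁ 1, ?_, ?_⟩
        · intro h0
          have h1 := congrFun h0 j₀
          have hj10 : j₀ ≠ j₁ := Ne.symm hne
          simp only [Pi.add_apply, Pi.sub_apply, Pi.smul_apply, Pi.single_eq_same,
            Pi.single_eq_of_ne hj10, smul_eq_mul, mul_zero, add_zero,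
            Pi.zero_apply] at h1
          omega
        · rw [Matrix.mulVec_add, Matrix.mulVec_sub, Matrix.mulVec_smul,
            Matrix.mulVec_smul, hx, QCC.col_eq hA hj₀, QCC.col_eq hA hj₁]
          module
      · -- acyclicity
        intro v c hc
        rcases Nat.even_or_odd c.length with hev | hodd
        · exact hnoeven c hc hev
        obtain ⟨z, hz, hz1, hz0⟩ := QCC.trail_vec hA hinj c hc.isTrail
        rw [hodd.neg_one_pow] at hz
        obtain ⟨x, hx⟩ := QCC.walk_vec hA ((hcoh.preconnected v a).some)
        apply hdet
        apply Matrix.exists_mulVec_eq_zero_iff.mp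
        set l := ((hcoh.preconnected v a).some).length with hl
        refine ⟨z - (2:ℤ) • x - ((-1:ℤ)^l) • Pi.single j₀ 1, ?_, ?_⟩
        · intro h0
          have h1 := congrFun h0 j₀
          have hz0' : z j₀ = 0 := hz0 j₀ (fun hmem => (hcyc_edge c _ hmem).2 hdiag)
          have hpm : ((-1:ℤ))^l = 1 ∨ ((-1:ℤ))^l = -1 := by
            rcases Nat.even_or_odd l with h | h
            · exact Or.inl h.neg_one_pow
            · exact Or.inr h.neg_one_pow
          simp only [Pi.sub_apply, Pi.smul_apply, Pi.single_eq_same, smul_eq_mul,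
            mul_one, hz0', Pi.zero_apply] at h1
          rcases hpm with h | h <;> rw [h] at h1 <;> omega
        · rw [Matrix.mulVec_sub, Matrix.mulVec_sub, Matrix.mulVec_smul,
            Matrix.mulVec_smul, hz, hx, QCC.col_eq hA hj₀]
          module
    · -- no loops : unique odd cycle
      have hndiag : ∀ j, ¬ (e j).IsDiag := fun j hd => hD ⟨j, hd⟩
      have hO : ∃ v, ∃ w : G.Walk v v, Odd w.length := hDO.resolve_left hD
      have hnacyc : ¬ G.IsAcyclic := by
        intro hac
        obtain ⟨v, w, hodd⟩ := hO
        exact (Nat.not_odd_iff_even.mpr (QCC.closed_walk_even hcoh hac w)) hodd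
      unfold SimpleGraph.IsAcyclic at hnacyc
      push_neg at hnacyc
      obtain ⟨v, c, hc⟩ := hnacyc
      have hcodd : Odd c.length := Nat.not_even_iff_odd.mp (hnoeven c hc)
      -- key: two cycles with an edge in one but not the other is impossible
      have main : ∀ {u1 u2 : Fin n} (c1 : G.Walk u1 u1) (c2 : G.Walk u2 u2),
          c1.IsCycle → c2.IsCycle → ∀ s, s ∈ c1.edges → s ∉ c2.edges → False := by
        intro u1 u2 c1 c2 h1 h2 s hs1 hs2
        have ho1 : Odd c1.length := Nat.not_even_iff_odd.mp (hnoeven c1 h1)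
        have ho2 : Odd c2.length := Nat.not_even_iff_odd.mp (hnoeven c2 h2)
        obtain ⟨z1, hz1, hz11, hz10⟩ := QCC.trail_vec hA hinj c1 h1.isTrail
        obtain ⟨z2, hz2, hz21, hz20⟩ := QCC.trail_vec hA hinj c2 h2.isTrail
        rw [ho1.neg_one_pow] at hz1
        rw [ho2.neg_one_pow] at hz2
        obtain ⟨x, hx⟩ := QCC.walk_vec hA ((hcoh.preconnected u1 u2).some)
        apply hdet
        apply Matrix.exists_mulVec_eq_zero_iff.mp
        set l := ((hcoh.preconnected u1 u2).some).length with hl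
        obtain ⟨j, hj⟩ := (hcyc_edge c1 s hs1).1
        refine ⟨z1 - (2:ℤ) • x - ((-1:ℤ)^l) • z2, ?_, ?_⟩
        · intro h0
          have hje := congrFun h0 j
          have hz20' : z2 j = 0 := hz20 j (hj ▸ hs2)
          have hodd1 : Odd (z1 j) := hz11 j (hj ▸ hs1)
          simp only [Pi.sub_apply, Pi.smul_apply, smul_eq_mul, hz20', mul_zero,
            sub_zero, Pi.zero_apply] at hje
          rw [Int.odd_iff] at hodd1
          omega
        · rw [Matrix.mulVec_sub, Matrix.mulVec_sub, Matrix.mulVec_smul,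
            Matrix.mulVec_smul, hz1, hz2, hx]
          module
      refine Or.inl ⟨hndiag, v, c, hc, hcodd, ?_⟩
      intro w c' hc'
      by_contra hneq
      have hdiff : ∃ s : Sym2 (Fin n),
          (s ∈ c'.edges ∧ s ∉ c.edges) ∨ (s ∈ c.edges ∧ s ∉ c'.edges) := by
        by_contra hcon
        push_neg at hcon
        apply hneq
        ext s
        simp only [List.mem_toFinset]
        have := hcon s
        tauto
      obtain ⟨s, hs | hs⟩ := hdiff
      · exact main c' c hc' hc s hs.1 hs.2
      · exact main c c' hc hc' s hs.1 hs.2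
  · -- structure → det ≠ 0
    rintro ⟨hinj, hcase⟩
    rcases hcase with ⟨hnd, v, c, hc, hodd, -⟩ | ⟨⟨j₀, hdiag, -⟩, -⟩
    · exact (hM2 (Or.inr ⟨v, c, hodd⟩)).2
    · exact (hM2 (Or.inl ⟨j₀, hdiag⟩)).2
end

section
/- For $d = n-1$, the only square-free monomial Cremona set in $\mathbb{K}[x_1,\ldots,x_n]$ up to permutation of variables is $\{x_2x_3\cdots x_n,\; x_1x_3\cdots x_n,\; \ldots,\; x_1x_2\cdots x_{n-1}\}$, i.e., the set whose log matrix is $J - I$ (anti-Kronecker delta). Moreover $\det(J - I) = \pm(n-1)$, so this set is indeed a Cremona set. -/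
/-- For `d = n - 1` the only square-free monomial Cremona set is the standard
involution: a `{0,1}` log matrix with column sums `n - 1` and no all-ones row
is a permutation of `J - I`; moreover `det (J - I) = (-1)^(n-1) (n-1) = ±(n-1)`. -/
theorem degree_n_sub_one_classification (n : ℕ) (hn : 2 ≤ n)
    (A : Matrix (Fin n) (Fin n) ℤ)
    (h01 : ∀ i j, A i j = 0 ∨ A i j = 1)
    (hcol : ∀ j, ∑ i, A i j = (n : ℤ) - 1)
    (hnocommon : ∀ i, ∃ j, A i j = 0) :
    (∃ σ : Equiv.Perm (Fin n), ∀ i j, A i j = if i = σ j then 0 else 1) ∧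
      ((Matrix.of fun _ _ : Fin n => (1 : ℤ)) - 1).det =
        (-1 : ℤ) ^ (n - 1) * ((n : ℤ) - 1) := by
  constructor
  · -- each column has exactly one zero
    have hcard : ∀ j, (Finset.univ.filter (fun i => A i j = 0)).card = 1 := by
      intro j
      have hsplit :
          (Finset.univ.filter (fun i => A i j = 0)).card
            + (Finset.univ.filter (fun i => ¬ A i j = 0)).card = n := by
        rw [Finset.card_filter_add_card_filter_not]
        simp
      have hsum : ∑ i, A i j
          = ((Finset.univ.filter (fun i => ¬ A i j = 0)).card : ℤ) := by
        rw [← Finset.sum_filter_ne_zero]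
        have hone : ∀ i ∈ Finset.univ.filter (fun i => A i j ≠ 0), A i j = 1 := by
          intro i hi
          simp only [Finset.mem_filter] at hi
          rcases h01 i j with h | h
          · exact absurd h hi.2
          · exact h
        rw [Finset.sum_congr rfl hone]
        simp
      rw [hcol j] at hsum
      have : ((Finset.univ.filter (fun i => ¬ A i j = 0)).card : ℤ) = n - 1 :=
        hsum.symm
      omega
    have hex : ∀ j, ∃! i, A i j = 0 := by
      intro j
      obtain ⟨a, ha⟩ := Finset.card_eq_one.mp (hcard j)
      refine ⟨a, ?_, ?_⟩
      · have : a ∈ Finset.univ.filter (fun i => A i j = 0) := ha ▸ Finset.mem_singleton_self a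
        simpa using this
      · intro y hy
        have : y ∈ Finset.univ.filter (fun i => A i j = 0) := by simpa using hy
        rw [ha] at this; simpa using this
    choose f hf hfu using hex
    have hsurj : Function.Surjective f := by
      intro i
      obtain ⟨j, hj⟩ := hnocommon i
      exact ⟨j, (hfu j i hj).symm⟩
    have hbij : Function.Bijective f := Finite.surjective_iff_bijective.mp hsurj
    refine ⟨Equiv.ofBijective f hbij, fun i j => ?_⟩
    simp only [Equiv.ofBijective_apply]
    by_cases h : i = f j
    · simp [h, hf j]
    · simp only [h, if_false]
      rcases h01 i j with h0 | h1
      · exact absurd (hfu j i h0) h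
      · exact h1
  · have hJ : (Matrix.of fun _ _ : Fin n => (1 : ℤ))
        = Matrix.replicateCol Unit (fun _ => (1 : ℤ)) * Matrix.replicateRow Unit (fun _ => (1 : ℤ)) := by
      ext i j; simp [Matrix.mul_apply]
    have : ((Matrix.of fun _ _ : Fin n => (1 : ℤ)) - 1)
        = (-1 : ℤ) • (1 + Matrix.replicateCol Unit (fun _ => (1 : ℤ)) * Matrix.replicateRow Unit (fun _ => (-1 : ℤ))) := by
      ext i j
      simp [Matrix.mul_apply, Matrix.one_apply, Matrix.sub_apply]
      by_cases h : i = j <;> simp [h]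
    rw [this, Matrix.det_smul, Matrix.det_one_add_replicateCol_mul_replicateRow]
    simp only [dotProduct, Finset.sum_const, Finset.card_univ, Fintype.card_fin,
      smul_eq_mul, mul_neg, mul_one, nsmul_eq_mul]
    have h2 : (-1 : ℤ) ^ n = -(-1 : ℤ) ^ (n - 1) := by
      obtain ⟨m, rfl⟩ : ∃ m, n = m + 1 := ⟨n - 1, by omega⟩
      simp [pow_succ]
    rw [h2]; ring
end

section
/- (Lemma mdc) Let $F = \{f_1,\ldots,f_6\} \subset \mathbb{K}[x_1,\ldots,x_6]$ be square-free cubic monomials whose $6\times 6$ log matrix $A_F$ satisfies $\det A_F = \pm 3$. Then for every choice of $4$ monomials from $F$, there exist two of them whose greatest common divisor has degree $2$ (i.e., two of them share at least two variables). -/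
lemma cast3 : (Int.castRingHom (ZMod 2)) 3 = 1 := by decide
lemma castm3 : (Int.castRingHom (ZMod 2)) (-3) = 1 := by decide

/-- Lemma (mdc): if six square-free cubic monomials in six variables form a
Cremona set (log matrix determinant `±3`), then among any four of them two
share at least two variables (their gcd has degree 2). -/
theorem gcd_two_of_four (f : Fin 6 → Finset (Fin 6))
    (hcard : ∀ j, (f j).card = 3)
    (A : Matrix (Fin 6) (Fin 6) ℤ)
    (hA : ∀ i j, A i j = if i ∈ f j then 1 else 0)
    (hdet : A.det = 3 ∨ A.det = -3)
    (S : Finset (Fin 6)) (hS : S.card = 4) :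
    ∃ j ∈ S, ∃ k ∈ S, j ≠ k ∧ 2 ≤ (f j ∩ f k).card := by
  by_contra hcon
  push_neg at hcon
  -- hcon : ∀ j ∈ S, ∀ k ∈ S, j ≠ k → (f j ∩ f k).card < 2
  set d : Fin 6 → ℕ := fun i => (S.filter (fun j => i ∈ f j)).card with hd
  have hdexp : ∀ i, d i = ∑ j ∈ S, (if i ∈ f j then 1 else 0) := by
    intro i
    show (S.filter (fun j => i ∈ f j)).card = _
    exact Finset.card_filter _ _
  have hpair : ∀ j k : Fin 6, (f j ∩ f k).card
      = ∑ i : Fin 6, (if i ∈ f j then (1:ℕ) else 0) * (if i ∈ f k then 1 else 0) := by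
    intro j k
    have hjk : f j ∩ f k = Finset.univ.filter (fun i => i ∈ f j ∧ i ∈ f k) := by
      ext i; simp [Finset.mem_inter]
    rw [hjk, Finset.card_filter]
    refine Finset.sum_congr rfl fun i _ => ?_
    by_cases h1 : i ∈ f j <;> by_cases h2 : i ∈ f k <;> simp [h1, h2]
  have hsum : ∑ i : Fin 6, d i = 12 := by
    simp only [hdexp]
    rw [Finset.sum_comm]
    have : ∀ j : Fin 6, ∑ i : Fin 6, (if i ∈ f j then (1:ℕ) else 0) = 3 := by
      intro j
      rw [Finset.sum_boole]
      simp [Finset.filter_univ_mem, hcard]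
    simp only [this]
    simp [hS]
  have hsq : ∑ i : Fin 6, d i * d i ≤ 24 := by
    have e : ∑ i : Fin 6, d i * d i = ∑ j ∈ S, ∑ k ∈ S, (f j ∩ f k).card := by
      simp only [hdexp, Finset.sum_mul_sum]
      rw [Finset.sum_comm]
      refine Finset.sum_congr rfl fun j _ => ?_
      rw [Finset.sum_comm]
      exact Finset.sum_congr rfl fun k _ => (hpair j k).symm
    rw [e]
    have hb : ∀ j ∈ S, ∑ k ∈ S, (f j ∩ f k).card ≤ 6 := by
      intro j hj
      calc ∑ k ∈ S, (f j ∩ f k).card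
          ≤ ∑ k ∈ S, (if k = j then 3 else 1) := by
            refine Finset.sum_le_sum fun k hk => ?_
            by_cases hkj : k = j
            · subst hkj; simp [Finset.inter_self, hcard]
            · simp only [hkj, if_false]
              have := hcon j hj k hk (Ne.symm hkj)
              omega
        _ = 6 := by
            have : ∀ k, (if k = j then (3:ℕ) else 1) = (if k = j then 2 else 0) + 1 := by
              intro k; split <;> rfl
            simp only [this, Finset.sum_add_distrib, Finset.sum_ite_eq', hj,
              Finset.sum_const, hS, if_true, smul_eq_mul]
    calc ∑ j ∈ S, ∑ k ∈ S, (f j ∩ f k).card ≤ ∑ j ∈ S, 6 := Finset.sum_le_sum hb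
      _ = 24 := by simp [hS]
  have hd2 : ∀ i, d i = 2 := by
    have hz : ∑ i : Fin 6, ((d i : ℤ) - 2)^2 ≤ 0 := by
      have e : ∑ i : Fin 6, ((d i : ℤ) - 2)^2
          = (∑ i : Fin 6, ((d i : ℤ) * d i)) - 4 * (∑ i : Fin 6, (d i : ℤ)) + 24 := by
        rw [Finset.mul_sum, ← Finset.sum_sub_distrib]
        have : (24 : ℤ) = ∑ _i : Fin 6, 4 := by simp
        rw [this, ← Finset.sum_add_distrib]
        exact Finset.sum_congr rfl fun i _ => by ring
      rw [e]
      have c1 : (∑ i : Fin 6, ((d i : ℤ) * d i)) ≤ 24 := by exact_mod_cast hsq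
      have c2 : (∑ i : Fin 6, (d i : ℤ)) = 12 := by exact_mod_cast hsum
      rw [c2]; linarith
    intro i
    have hterm : ((d i : ℤ) - 2)^2 = 0 := by
      have hnn : ∀ i ∈ Finset.univ, (0:ℤ) ≤ ((d i : ℤ) - 2)^2 := fun i _ => sq_nonneg _
      have := Finset.sum_eq_zero_iff_of_nonneg hnn
      have hle : ∑ i : Fin 6, ((d i : ℤ) - 2)^2 = 0 :=
        le_antisymm hz (Finset.sum_nonneg hnn)
      exact (this.mp hle) i (Finset.mem_univ i)
    have : (d i : ℤ) = 2 := by nlinarith [hterm]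
    exact_mod_cast this
  -- mod 2 argument
  haveI : Fact (Nat.Prime 2) := ⟨by norm_num⟩
  set B : Matrix (Fin 6) (Fin 6) (ZMod 2) := A.map ⇑(Int.castRingHom (ZMod 2)) with hB
  have hBdet : B.det = 1 := by
    have h1 : B.det = (Int.castRingHom (ZMod 2)) A.det := by
      rw [hB, RingHom.map_det, RingHom.mapMatrix_apply]
    rcases hdet with h | h
    · rw [h1, h]; exact cast3
    · rw [h1, h]; exact castm3
  have hdep : ∃ v : Fin 6 → ZMod 2, v ≠ 0 ∧ B.mulVec v = 0 := by
    refine ⟨fun j => if j ∈ S then 1 else 0, ?_, ?_⟩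
    · have : S.Nonempty := Finset.card_pos.mp (by omega)
      obtain ⟨j, hj⟩ := this
      intro hv
      have := congrFun hv j
      simp [hj] at this
    · funext i
      show ∑ j : Fin 6, B i j * (if j ∈ S then 1 else 0) = (0 : Fin 6 → ZMod 2) i
      have e1 : ∀ j : Fin 6, B i j * (if j ∈ S then (1:ZMod 2) else 0)
          = if j ∈ S then B i j else 0 := by intro j; split <;> simp
      simp only [e1, Finset.sum_ite_mem, Finset.univ_inter, Pi.zero_apply]
      have e2 : ∑ j ∈ S, B i j = ((d i : ℕ) : ZMod 2) := by
        rw [hdexp i]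
        push_cast
        refine Finset.sum_congr rfl fun j hj => ?_
        simp only [hB, hA, Matrix.map_apply, Int.coe_castRingHom]
        split <;> simp
      rw [e2, hd2 i]
      exact ZMod.natCast_self 2
  obtain ⟨v, hv0, hv⟩ := hdep
  have : B.det = 0 := (Matrix.exists_mulVec_eq_zero_iff).mp ⟨v, hv0, hv⟩
  rw [hBdet] at this
  exact one_ne_zero this
end

section
/- (Plucking roots, determinant form) Let $F = \{f_1,\ldots,f_n\}$ be square-free monomials of degree $d$ in $\mathbb{K}[x_1,\ldots,x_n]$ such that $f_i = x_n g_i$ for $i = 1,\ldots,n-1$ and $x_n \nmid f_n$, and suppose both $F$ and $\tilde F = \{g_1,\ldots,g_{n-1}\} \subset \mathbb{K}[x_1,\ldots,x_{n-1}]$ satisfy the canonical restrictions. Then $F$ is a Cremona set (i.e., $\det A_F = \pm d$) if and only if $\tilde F$ is a Cremona set (i.e., $\det A_{\tilde F} = \pm(d-1)$). -/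
/-- Plucking roots, determinant form. `A` is the `{0,1}` log matrix of `n + 1`
square-free monomials of degree `d` in `n + 1` variables, the last variable
divides every monomial except the last one (a root), and `B` is the log matrix
of the quotients by the root variable. If both satisfy the canonical
restrictions then `det A = ±d` iff `det B = ±(d - 1)`. -/
theorem plucking_roots (n : ℕ) (hn : 1 ≤ n) (d : ℤ) (hd : 2 ≤ d)
    (A : Matrix (Fin (n + 1)) (Fin (n + 1)) ℤ)
    (h01 : ∀ i j, A i j = 0 ∨ A i j = 1)
    (hcol : ∀ j, ∑ i, A i j = d)
    (hroot : ∀ j, A (Fin.last n) j = if j = Fin.last n then 0 else 1)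
    (hA1 : ∀ i, ∃ j, A i j = 1) (hA0 : ∀ i, ∃ j, A i j = 0)
    (B : Matrix (Fin n) (Fin n) ℤ)
    (hB : ∀ i j, B i j = A (Fin.castSucc i) (Fin.castSucc j))
    (hB1 : ∀ i, ∃ j, B i j = 1) (hB0 : ∀ i, ∃ j, B i j = 0) :
    (A.det = d ∨ A.det = -d) ↔ (B.det = d - 1 ∨ B.det = -(d - 1)) := by
  -- the vector `e` : indicator of the last coordinate
  set e : Fin (n + 1) → ℤ := fun j => if j = Fin.last n then 1 else 0 with he
  set C : Matrix (Fin (n + 1)) (Fin (n + 1)) ℤ := A.updateRow (Fin.last n) e with hC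
  -- `C` has last row `e`, so its determinant is `det B`
  have hCB : C.det = B.det := by
    rw [show C.det = Matrix.det C from rfl, Matrix.det_succ_row C (Fin.last n)]
    rw [Finset.sum_eq_single (Fin.last n)]
    · have h1 : C (Fin.last n) (Fin.last n) = 1 := by
        simp [hC, he]
      have h2 : (C.submatrix (Fin.last n).succAbove (Fin.last n).succAbove) = B := by
        ext i j
        simp only [Matrix.submatrix_apply, Fin.succAbove_last]
        rw [hC, Matrix.updateRow_ne (by exact (Fin.castSucc_lt_last i).ne), ← hB]
      rw [h1, h2]
      have h3 : ((Fin.last n : Fin (n+1)) : ℕ) = n := rfl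
      rw [h3, ← two_mul, pow_mul]
      norm_num
    · intro j _ hj
      have : C (Fin.last n) j = 0 := by simp [hC, he, hj]
      rw [this]; ring
    · simp
  -- key identity : (d-1) * det A = - (d * det B)
  have key : (d - 1) * A.det = -(d * B.det) := by
    have hrow : (∑ k, (1 : ℤ) • A k) = (d • A (Fin.last n)) + d • e := by
      funext j
      simp only [Finset.sum_apply, Pi.smul_apply, Pi.add_apply, smul_eq_mul, one_mul]
      rw [hcol j, hroot j]
      by_cases hj : j = Fin.last n <;> simp [he, hj]
    have h1 : (A.updateRow (Fin.last n) (∑ k, (1 : ℤ) • A k)).det = A.det := by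
      rw [Matrix.det_updateRow_sum]; simp
    rw [hrow] at h1
    rw [Matrix.det_updateRow_add, Matrix.det_updateRow_smul, Matrix.det_updateRow_smul,
      Matrix.updateRow_eq_self, ← hC, hCB] at h1
    linarith
  have hd0 : d ≠ 0 := by omega
  have hd1 : d - 1 ≠ 0 := by omega
  constructor
  · rintro (h | h)
    · right
      have : d * -(d - 1) = d * B.det := by rw [h] at key; linarith
      exact (mul_left_cancel₀ hd0 this).symm
    · left
      have : d * (d - 1) = d * B.det := by rw [h] at key; linarith
      exact (mul_left_cancel₀ hd0 this).symm
  · rintro (h | h)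
    · right
      have : (d - 1) * -d = (d - 1) * A.det := by rw [h] at key; linarith
      exact (mul_left_cancel₀ hd1 this).symm
    · left
      have : (d - 1) * d = (d - 1) * A.det := by rw [h] at key; linarith
      exact (mul_left_cancel₀ hd1 this).symm
end
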